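/- Let x ∈ W^λ and w ∈ W be such that w ≤ x. Then the set {z ∈ xW_λ : w ≤ z} (that is, the intersection of the Bruhat interval [w, w₀] with the coset xW_λ) is nonempty and has a least element with respect to the Bruhat order. -/

import Mathlib

/-!
Setup: a Coxeter system `(W, S')` with Bruhat order defined via the subword property,
a subset `S` of the simple reflections (indexed by `S : Set B`), the standard parabolic
subgroup `W_λ = ⟨S⟩`, the set `W^λ` of minimal-length left coset representatives, and
the set `W̃^λ` of maximal-length left coset representatives.
-/

namespace SingularBGG

variable {B W : Type*} [Group W] {M : CoxeterMatrix B}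

/-- Bruhat order on a Coxeter group: `u ≤ v` iff some (equivalently, every) reduced word
for `v` contains a subword which is a reduced word for `u`. -/
def BruhatLE (cs : CoxeterSystem M W) (u v : W) : Prop :=
  ∃ ω : List B, cs.IsReduced ω ∧ cs.wordProd ω = v ∧
    ∃ ω' : List B, ω'.Sublist ω ∧ cs.IsReduced ω' ∧ cs.wordProd ω' = u

/-- Strict Bruhat order. -/
def BruhatLT (cs : CoxeterSystem M W) (u v : W) : Prop :=
  BruhatLE cs u v ∧ u ≠ v

/-- Bruhat covering relation `u ⋖ v`: `u < v` and `ℓ(v) = ℓ(u) + 1`. -/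
def BruhatCov (cs : CoxeterSystem M W) (u v : W) : Prop :=
  BruhatLT cs u v ∧ cs.length v = cs.length u + 1

/-- The standard parabolic subgroup `W_λ` generated by the simple reflections indexed
by `S`. -/
def paraSubgroup (cs : CoxeterSystem M W) (S : Set B) : Subgroup W :=
  Subgroup.closure (cs.simple '' S)

/-- The left coset `x·W_λ`. -/
def leftCosetOf (cs : CoxeterSystem M W) (S : Set B) (x : W) : Set W :=
  {z : W | x⁻¹ * z ∈ paraSubgroup cs S}

/-- `x` is a minimal-length representative of its left coset `x·W_λ`, i.e. `x ∈ W^λ`. -/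
def IsMinRep (cs : CoxeterSystem M W) (S : Set B) (x : W) : Prop :=
  ∀ z ∈ leftCosetOf cs S x, cs.length x ≤ cs.length z

/-- `x` is a maximal-length representative of its left coset `x·W_λ`, i.e.
`x ∈ W̃^λ = W^λ·w₀^λ`. -/
def IsMaxRep (cs : CoxeterSystem M W) (S : Set B) (x : W) : Prop :=
  ∀ z ∈ leftCosetOf cs S x, cs.length z ≤ cs.length x

section AuxStrongExchange

open List

variable [DecidableEq W]

lemma conj_eq_iff (g a b : W) : g * a * g⁻¹ = b ↔ a = g⁻¹ * b * g := by
  constructor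
  · intro h; rw [← h]; simp [mul_assoc]
  · intro h; rw [h]; simp [mul_assoc]

/-- The sign-flipping involution attached to a simple reflection. -/
def etaFun (cs : CoxeterSystem M W) (i : B) : W × ℤˣ → W × ℤˣ :=
  fun p => (cs.simple i * p.1 * cs.simple i, if p.1 = cs.simple i then -p.2 else p.2)

lemma etaFun_involutive (cs : CoxeterSystem M W) (i : B) :
    Function.Involutive (etaFun cs i) := by
  rintro ⟨t, ε⟩
  simp only [etaFun]
  have h1 : cs.simple i * (cs.simple i * t * cs.simple i) * cs.simple i = t := by
    group
    simp [cs.simple_sq]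
  have h2 : (cs.simple i * t * cs.simple i = cs.simple i) ↔ (t = cs.simple i) := by
    rw [show cs.simple i * t * cs.simple i = cs.simple i * t * (cs.simple i)⁻¹ by
      rw [cs.inv_simple], conj_eq_iff]
    rw [cs.inv_simple, cs.simple_mul_simple_cancel_right]
  by_cases h : t = cs.simple i <;> simp [h, h1, h2]

def eta (cs : CoxeterSystem M W) (i : B) : Equiv.Perm (W × ℤˣ) :=
  (etaFun_involutive cs i).toPerm

@[simp] lemma eta_apply (cs : CoxeterSystem M W) (i : B) (p : W × ℤˣ) :
    eta cs i p = etaFun cs i p := rfl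

lemma eta_liftable (cs : CoxeterSystem M W) : M.IsLiftable (eta cs) := by
  intro i j
  set m := M i j with hm
  rcases Nat.eq_zero_or_pos m with h0 | hmpos
  · rw [h0, pow_zero]
  set p : W := cs.simple i * cs.simple j with hp
  have hpm : p ^ m = 1 := cs.simple_mul_simple_pow i j
  have base : cs.simple j * p * (cs.simple j)⁻¹ = p⁻¹ := by
    rw [cs.inv_simple, hp]
    calc cs.simple j * (cs.simple i * cs.simple j) * cs.simple j
        = cs.simple j * cs.simple i * (cs.simple j * cs.simple j) := by group
      _ = cs.simple j * cs.simple i := by rw [cs.simple_mul_simple_self]; group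
      _ = (cs.simple i * cs.simple j)⁻¹ := by rw [mul_inv_rev, cs.inv_simple, cs.inv_simple]
  have hconj : ∀ n : ℕ, cs.simple j * p ^ n * cs.simple j = (p ^ n)⁻¹ := by
    intro n
    calc cs.simple j * p ^ n * cs.simple j
        = cs.simple j * p ^ n * (cs.simple j)⁻¹ := by rw [cs.inv_simple]
      _ = (cs.simple j * p * (cs.simple j)⁻¹) ^ n := (conj_pow ..).symm
      _ = (p⁻¹) ^ n := by rw [base]
      _ = (p ^ n)⁻¹ := by rw [inv_pow]
  have hswap : ∀ n : ℕ, (p ^ n)⁻¹ * cs.simple j = cs.simple j * p ^ n := by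
    intro n
    rw [← hconj n, mul_assoc, cs.simple_mul_simple_self, mul_one]
  have hconj2 : ∀ k : ℕ, (p ^ k)⁻¹ * cs.simple j * p ^ k = cs.simple j * p ^ (2 * k) := by
    intro k
    rw [hswap k, two_mul, pow_add, mul_assoc]
  have hsjsisj : cs.simple j * cs.simple i * cs.simple j = p⁻¹ * cs.simple j := by
    rw [hp, mul_inv_rev, cs.inv_simple, cs.inv_simple]
  have hconj3 : ∀ k : ℕ,
      (p ^ k)⁻¹ * (cs.simple j * cs.simple i * cs.simple j) * p ^ k
        = cs.simple j * p ^ (2 * k + 1) := by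
    intro k
    rw [hsjsisj]
    have h1 : (p ^ k)⁻¹ * (p⁻¹ * cs.simple j) * p ^ k
        = (p ^ (k + 1))⁻¹ * cs.simple j * p ^ k := by
      simp [pow_succ', mul_inv_rev, mul_assoc]
    rw [h1, hswap (k + 1), mul_assoc, ← pow_add]
    congr 2
    omega
  apply Equiv.ext
  rintro ⟨t, ε⟩
  set χ : ℕ → ℤˣ := fun n => if t = cs.simple j * p ^ n then -1 else 1 with hχ
  have key : ∀ k : ℕ, ((eta cs i * eta cs j) ^ k) (t, ε)
      = (p ^ k * t * (p ^ k)⁻¹, ε * ∏ n ∈ Finset.range (2 * k), χ n) := by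
    intro k
    induction k with
    | zero => simp
    | succ k ih =>
      rw [pow_succ', Equiv.Perm.mul_apply, ih, Equiv.Perm.mul_apply]
      set E := ε * ∏ n ∈ Finset.range (2 * k), χ n with hE
      have e1 : (p ^ k * t * (p ^ k)⁻¹ = cs.simple j) ↔ (t = cs.simple j * p ^ (2 * k)) := by
        rw [conj_eq_iff, hconj2 k]
      have e2 : (cs.simple j * (p ^ k * t * (p ^ k)⁻¹) * cs.simple j = cs.simple i)
          ↔ (t = cs.simple j * p ^ (2 * k + 1)) := by
        rw [show cs.simple j * (p ^ k * t * (p ^ k)⁻¹) * cs.simple j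
            = cs.simple j * (p ^ k * t * (p ^ k)⁻¹) * (cs.simple j)⁻¹ by rw [cs.inv_simple],
          conj_eq_iff, conj_eq_iff, cs.inv_simple, hconj3 k]
      have step1 : (eta cs j) (p ^ k * t * (p ^ k)⁻¹, E)
          = (cs.simple j * (p ^ k * t * (p ^ k)⁻¹) * cs.simple j, E * χ (2 * k)) := by
        simp only [eta_apply, etaFun]
        congr 1
        by_cases c1 : t = cs.simple j * p ^ (2 * k)
        · rw [if_pos (e1.mpr c1), hχ]
          simp [c1]
        · rw [if_neg (fun h => c1 (e1.mp h)), hχ]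
          simp [c1]
      have step2 : (eta cs i) (cs.simple j * (p ^ k * t * (p ^ k)⁻¹) * cs.simple j, E * χ (2 * k))
          = (p ^ (k + 1) * t * (p ^ (k + 1))⁻¹, E * χ (2 * k) * χ (2 * k + 1)) := by
        simp only [eta_apply, etaFun]
        have hfirst : cs.simple i * (cs.simple j * (p ^ k * t * (p ^ k)⁻¹) * cs.simple j)
            * cs.simple i = p ^ (k + 1) * t * (p ^ (k + 1))⁻¹ := by
          rw [pow_succ' p k, mul_inv_rev, hp, mul_inv_rev, cs.inv_simple, cs.inv_simple]
          simp [mul_assoc]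
        rw [hfirst]
        congr 1
        by_cases c2 : t = cs.simple j * p ^ (2 * k + 1)
        · rw [if_pos (e2.mpr c2), hχ]
          simp [c2]
        · rw [if_neg (fun h => c2 (e2.mp h)), hχ]
          simp [c2]
      rw [step1, step2]
      have hprod : (∏ n ∈ Finset.range (2 * (k + 1)), χ n)
          = ((∏ n ∈ Finset.range (2 * k), χ n) * χ (2 * k)) * χ (2 * k + 1) := by
        have h2k : 2 * (k + 1) = (2 * k + 1) + 1 := by ring
        rw [h2k, Finset.prod_range_succ, Finset.prod_range_succ]
      rw [hprod, hE]
      congr 1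
      simp [mul_assoc]
  rw [key m, Equiv.Perm.one_apply]
  have h1 : p ^ m * t * (p ^ m)⁻¹ = t := by rw [hpm]; group
  have h2 : (∏ n ∈ Finset.range (2 * m), χ n) = 1 := by
    have hsplit : 2 * m = m + m := by ring
    rw [hsplit, Finset.prod_range_add]
    have hshift : ∀ n, χ (m + n) = χ n := by
      intro n
      simp only [hχ, pow_add, hpm, one_mul]
    simp only [hshift]
    exact Int.units_mul_self _
  rw [h1, h2, mul_one]

noncomputable def Phi (cs : CoxeterSystem M W) : W →* Equiv.Perm (W × ℤˣ) :=
  cs.lift ⟨eta cs, eta_liftable cs⟩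

lemma Phi_simple (cs : CoxeterSystem M W) (i : B) : Phi cs (cs.simple i) = eta cs i :=
  cs.lift_apply_simple (eta_liftable cs) i

lemma Phi_inv_wordProd (cs : CoxeterSystem M W) (ω : List B) (t : W) (ε : ℤˣ) :
    Phi cs (cs.wordProd ω)⁻¹ (t, ε)
      = ((cs.wordProd ω)⁻¹ * t * cs.wordProd ω,
          ε * (-1) ^ ((cs.leftInvSeq ω).count t)) := by
  induction ω generalizing t ε with
  | nil => simp
  | cons i ω ih =>
    have hinv : (cs.wordProd (i :: ω))⁻¹ = (cs.wordProd ω)⁻¹ * cs.simple i := by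
      rw [cs.wordProd_cons, mul_inv_rev, cs.inv_simple]
    rw [hinv, map_mul, Equiv.Perm.mul_apply, Phi_simple, eta_apply]
    simp only [etaFun]
    rw [ih]
    have hlis : cs.leftInvSeq (i :: ω)
        = cs.simple i :: List.map (⇑(MulAut.conj (cs.simple i))) (cs.leftInvSeq ω) := rfl
    have hcount : (cs.leftInvSeq (i :: ω)).count t
        = (cs.leftInvSeq ω).count (cs.simple i * t * cs.simple i)
          + (if t = cs.simple i then 1 else 0) := by
      have hteq : t = (MulAut.conj (cs.simple i)) (cs.simple i * t * cs.simple i) := by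
        simp [MulAut.conj_apply, mul_assoc, cs.inv_simple,
          cs.simple_mul_simple_cancel_left, cs.simple_mul_simple_cancel_right]
      have hmap : (List.map (⇑(MulAut.conj (cs.simple i))) (cs.leftInvSeq ω)).count t
          = (cs.leftInvSeq ω).count (cs.simple i * t * cs.simple i) := by
        conv_lhs => rw [hteq]
        exact List.count_map_of_injective _ _ (MulAut.conj (cs.simple i)).injective _
      rw [hlis, List.count_cons, hmap]
      by_cases h : t = cs.simple i
      · simp [h]
      · rw [if_neg (fun e => h (beq_iff_eq.mp e).symm), if_neg h]
    refine Prod.ext ?_ ?_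
    · simp only [cs.wordProd_cons]
      simp [mul_assoc]
    · simp only [hcount]
      have hsss : cs.simple i * cs.simple i * cs.simple i = cs.simple i := by
        rw [cs.simple_mul_simple_self, one_mul]
      by_cases h : t = cs.simple i
      · simp [h, hsss, pow_succ, neg_mul, mul_neg]
      · simp [h]

lemma sign_eq_of_wordProd_eq (cs : CoxeterSystem M W) {ω ω' : List B}
    (h : cs.wordProd ω = cs.wordProd ω') (t : W) :
    ((-1 : ℤˣ)) ^ ((cs.leftInvSeq ω).count t) = (-1) ^ ((cs.leftInvSeq ω').count t) := by
  have h1 := Phi_inv_wordProd cs ω t 1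
  have h2 := Phi_inv_wordProd cs ω' t 1
  rw [h] at h1
  rw [h1] at h2
  simpa using congrArg Prod.snd h2

lemma odd_count_conj (cs : CoxeterSystem M W) (ξ : List B) (i : B) :
    Odd ((cs.leftInvSeq (ξ ++ i :: ξ.reverse)).count
      (cs.wordProd ξ * cs.simple i * (cs.wordProd ξ)⁻¹)) := by
  induction ξ with
  | nil => simp [CoxeterSystem.leftInvSeq]
  | cons j ξ ih =>
    set y := cs.wordProd ξ * cs.simple i * (cs.wordProd ξ)⁻¹ with hy
    have hword : (j :: ξ) ++ i :: (j :: ξ).reverse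
        = j :: ((ξ ++ i :: ξ.reverse) ++ [j]) := by
      simp
    set μ : List B := ξ ++ i :: ξ.reverse with hμ
    have hπμ : cs.wordProd μ = y := by
      rw [hμ, hy, cs.wordProd_append, cs.wordProd_cons, cs.wordProd_reverse, mul_assoc]
    have hlisc : cs.leftInvSeq (μ ++ [j]) = cs.leftInvSeq μ ++ [y * cs.simple j * y⁻¹] := by
      rw [← List.concat_eq_append, cs.leftInvSeq_concat, hπμ, List.concat_eq_append]
    have hliscons : cs.leftInvSeq (j :: (μ ++ [j]))
        = cs.simple j :: List.map (⇑(MulAut.conj (cs.simple j))) (cs.leftInvSeq (μ ++ [j])) :=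
      rfl
    have ht : cs.wordProd (j :: ξ) * cs.simple i * (cs.wordProd (j :: ξ))⁻¹
        = cs.simple j * y * cs.simple j := by
      rw [cs.wordProd_cons, hy, mul_inv_rev, cs.inv_simple]
      simp [mul_assoc]
    have hc1 : (List.map (⇑(MulAut.conj (cs.simple j))) (cs.leftInvSeq μ)).count
        (cs.simple j * y * cs.simple j) = (cs.leftInvSeq μ).count y := by
      have hcy : cs.simple j * y * cs.simple j = (MulAut.conj (cs.simple j)) y := by
        simp [MulAut.conj_apply, cs.inv_simple]
      rw [hcy]
      exact List.count_map_of_injective _ _ (MulAut.conj (cs.simple j)).injective _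
    have hDiff : (cs.simple j * y * cs.simple j = cs.simple j) ↔ y = cs.simple j := by
      constructor
      · intro h
        have := congrArg (fun u => cs.simple j * u * cs.simple j) h
        calc y = cs.simple j * (cs.simple j * y * cs.simple j) * cs.simple j := by
              simp [mul_assoc, cs.simple_mul_simple_cancel_left]
          _ = cs.simple j * cs.simple j * cs.simple j := by rw [h]
          _ = cs.simple j := by rw [cs.simple_mul_simple_self, one_mul]
      · intro h
        rw [h, cs.simple_mul_simple_self, one_mul]
    have hLast : (cs.simple j * y * cs.simple j
          = (MulAut.conj (cs.simple j)) (y * cs.simple j * y⁻¹))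
        ↔ y = cs.simple j := by
      simp only [MulAut.conj_apply, cs.inv_simple]
      constructor
      · intro h
        have h1 : cs.simple j * y = cs.simple j * (y * cs.simple j * y⁻¹) :=
          mul_right_cancel h
        have h2 : y = y * cs.simple j * y⁻¹ := mul_left_cancel h1
        have h3 : y * y = y * cs.simple j := by
          calc y * y = (y * cs.simple j * y⁻¹) * y := by rw [← h2]
            _ = y * cs.simple j := by simp [mul_assoc]
        exact mul_left_cancel h3
      · intro h
        rw [h]
        simp [mul_assoc, cs.simple_mul_simple_self]
    rw [hword, ht, hliscons, hlisc, List.map_append, List.count_cons, List.count_append, hc1]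
    have h2 : (List.map (⇑(MulAut.conj (cs.simple j))) [y * cs.simple j * y⁻¹]).count
        (cs.simple j * y * cs.simple j) = (if y = cs.simple j then 1 else 0) := by
      simp only [List.map_singleton, List.count_singleton]
      by_cases hc : y = cs.simple j
      · rw [if_pos hc, if_pos (beq_iff_eq.mpr (hLast.mpr hc).symm)]
      · rw [if_neg hc, if_neg (fun e => hc (hLast.mp (beq_iff_eq.mp e).symm))]
    have h3 : (if (cs.simple j == cs.simple j * y * cs.simple j) = true then 1 else 0)
        = (if y = cs.simple j then 1 else 0) := by
      by_cases hc : y = cs.simple j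
      · rw [if_pos hc, if_pos (beq_iff_eq.mpr (hDiff.mpr hc).symm)]
      · rw [if_neg hc, if_neg (fun e => hc (hDiff.mp (beq_iff_eq.mp e).symm))]
    rw [h2, h3]
    rw [Nat.odd_iff] at ih ⊢
    by_cases hc : y = cs.simple j
    · rw [hc] at ih
      simp only [hc, if_pos rfl]
      omega
    · rw [if_neg hc]
      omega

lemma Phi_refl_apply (cs : CoxeterSystem M W) {t : W} (ht : cs.IsReflection t) (ε : ℤˣ) :
    Phi cs t (t, ε) = (t, -ε) := by
  obtain ⟨x, i, rfl⟩ := ht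
  obtain ⟨ξ, hξ⟩ := cs.wordProd_surjective x
  set t := x * cs.simple i * x⁻¹ with htdef
  set μ : List B := ξ ++ i :: ξ.reverse with hμ
  have hπμ : cs.wordProd μ = t := by
    rw [hμ, htdef, cs.wordProd_append, cs.wordProd_cons, cs.wordProd_reverse, hξ, mul_assoc]
  have htinv : t⁻¹ = t := by
    rw [htdef, mul_inv_rev, mul_inv_rev, inv_inv, cs.inv_simple, mul_assoc]
  have ht2 : t = (cs.wordProd μ)⁻¹ := by rw [hπμ, htinv]
  have hodd : Odd ((cs.leftInvSeq μ).count t) := by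
    have := odd_count_conj cs ξ i
    rwa [hξ, ← htdef, ← hμ] at this
  calc Phi cs t (t, ε) = Phi cs (cs.wordProd μ)⁻¹ (t, ε) := by rw [← ht2]
    _ = ((cs.wordProd μ)⁻¹ * t * cs.wordProd μ, ε * (-1) ^ ((cs.leftInvSeq μ).count t)) :=
        Phi_inv_wordProd cs μ t ε
    _ = (t, -ε) := by
        refine Prod.ext ?_ ?_
        · show (cs.wordProd μ)⁻¹ * t * cs.wordProd μ = t
          rw [hπμ]; group
        · show ε * (-1) ^ ((cs.leftInvSeq μ).count t) = -ε
          rw [hodd.neg_one_pow, mul_neg_one]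

lemma exists_eraseIdx_of_mem_lis (cs : CoxeterSystem M W) {ω : List B} {t : W}
    (h : t ∈ cs.leftInvSeq ω) :
    ∃ j < ω.length, t * cs.wordProd ω = cs.wordProd (ω.eraseIdx j) := by
  obtain ⟨j, hj, hget⟩ := List.getElem_of_mem h
  have hj' : j < ω.length := by simpa using hj
  refine ⟨j, hj', ?_⟩
  have hgetD : (cs.leftInvSeq ω).getD j 1 = t := by
    rw [List.getD_eq_getElem _ 1 hj, hget]
  rw [← hgetD, cs.getD_leftInvSeq_mul_wordProd]

lemma odd_count_of_lt (cs : CoxeterSystem M W) {t : W} (ht : cs.IsReflection t)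
    (ω : List B) (hlt : cs.length (t * cs.wordProd ω) < cs.length (cs.wordProd ω)) :
    Odd ((cs.leftInvSeq ω).count t) := by
  obtain ⟨κ, hκred, hκ⟩ := cs.exists_reduced_word' (t * cs.wordProd ω)
  have hw : (cs.wordProd ω)⁻¹ = (cs.wordProd κ)⁻¹ * t := by
    rw [← hκ, mul_inv_rev, mul_assoc, ht.inv]
    simp [ht.mul_self]
  have e1 : Phi cs (cs.wordProd ω)⁻¹ (t, 1)
      = ((cs.wordProd ω)⁻¹ * t * cs.wordProd ω, (-1) ^ ((cs.leftInvSeq ω).count t)) := by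
    rw [Phi_inv_wordProd]; simp
  have e2 : Phi cs (cs.wordProd ω)⁻¹ (t, 1)
      = ((cs.wordProd κ)⁻¹ * t * cs.wordProd κ, -(-1) ^ ((cs.leftInvSeq κ).count t)) := by
    rw [hw, map_mul, Equiv.Perm.mul_apply, Phi_refl_apply cs ht, Phi_inv_wordProd]
    simp
  have hsign : ((-1 : ℤˣ)) ^ ((cs.leftInvSeq ω).count t)
      = -(-1) ^ ((cs.leftInvSeq κ).count t) := by
    have := e1.symm.trans e2
    exact congrArg Prod.snd this
  have heven : ¬ Odd ((cs.leftInvSeq κ).count t) := by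
    intro hodd
    have hmem : t ∈ cs.leftInvSeq κ := by
      apply List.count_pos_iff.mp
      rcases hodd with ⟨c, hc⟩
      omega
    obtain ⟨j, hj, herase⟩ := exists_eraseIdx_of_mem_lis cs hmem
    have hlen : cs.length (t * cs.wordProd κ) ≤ κ.length - 1 := by
      calc cs.length (t * cs.wordProd κ) = cs.length (cs.wordProd (κ.eraseIdx j)) := by
            rw [herase]
        _ ≤ (κ.eraseIdx j).length := cs.length_wordProd_le _
        _ = κ.length - 1 := by rw [List.length_eraseIdx]; simp [hj]
    have htκ : t * cs.wordProd κ = cs.wordProd ω := by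
      rw [← hκ, ← mul_assoc, ht.mul_self, one_mul]
    have hκlen : κ.length = cs.length (t * cs.wordProd ω) := by
      rw [hκ]; exact hκred.symm
    rw [htκ] at hlen
    omega
  rw [Nat.odd_iff] at heven
  have heven' : (cs.leftInvSeq κ).count t % 2 = 0 := by omega
  have : ((-1 : ℤˣ)) ^ ((cs.leftInvSeq κ).count t) = 1 := (Nat.even_iff.mpr heven').neg_one_pow
  rw [this] at hsign
  rw [Nat.odd_iff]
  by_contra hne
  have hne' : (cs.leftInvSeq ω).count t % 2 = 0 := by omega
  have : ((-1 : ℤˣ)) ^ ((cs.leftInvSeq ω).count t) = 1 := (Nat.even_iff.mpr hne').neg_one_pow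
  rw [this] at hsign
  exact absurd hsign (by decide)

/-- Strong exchange, left version. -/
lemma exchange_left (cs : CoxeterSystem M W) {ω : List B} {t : W} (ht : cs.IsReflection t)
    (hlt : cs.length (t * cs.wordProd ω) < cs.length (cs.wordProd ω)) :
    ∃ j < ω.length, t * cs.wordProd ω = cs.wordProd (ω.eraseIdx j) := by
  have hodd := odd_count_of_lt cs ht ω hlt
  have hmem : t ∈ cs.leftInvSeq ω := by
    apply List.count_pos_iff.mp
    rcases hodd with ⟨c, hc⟩
    omega
  exact exists_eraseIdx_of_mem_lis cs hmem

lemma reverse_eraseIdx_reverse {α : Type*} (l : List α) (j : ℕ) (hj : j < l.length) :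
    (l.reverse.eraseIdx j).reverse = l.eraseIdx (l.length - 1 - j) := by
  set k := l.length - 1 - j with hk
  rw [List.eraseIdx_eq_take_drop_succ, List.eraseIdx_eq_take_drop_succ,
    List.reverse_append, List.drop_reverse, List.take_reverse,
    List.reverse_reverse, List.reverse_reverse]
  have h1 : l.length - (j + 1) = k := by omega
  have h2 : l.length - j = k + 1 := by omega
  rw [h1, h2]

/-- Strong exchange, right version for simple reflections. -/
lemma exchange_right (cs : CoxeterSystem M W) (ω : List B) (i : B)
    (hlt : cs.length (cs.wordProd ω * cs.simple i) < cs.length (cs.wordProd ω)) :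
    ∃ j < ω.length, cs.wordProd ω * cs.simple i = cs.wordProd (ω.eraseIdx j) := by
  have hlt' : cs.length (cs.simple i * cs.wordProd ω.reverse)
      < cs.length (cs.wordProd ω.reverse) := by
    rw [cs.wordProd_reverse]
    have h1 : cs.simple i * (cs.wordProd ω)⁻¹ = (cs.wordProd ω * cs.simple i)⁻¹ := by
      rw [mul_inv_rev, cs.inv_simple]
    rw [h1, cs.length_inv, cs.length_inv]
    exact hlt
  obtain ⟨j, hj, herase⟩ := exchange_left cs (cs.isReflection_simple i) hlt'
  rw [List.length_reverse] at hj
  refine ⟨ω.length - 1 - j, by omega, ?_⟩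
  have h2 : cs.wordProd ω * cs.simple i
      = (cs.simple i * cs.wordProd ω.reverse)⁻¹ := by
    rw [cs.wordProd_reverse, mul_inv_rev, inv_inv, cs.inv_simple]
  rw [h2, herase, ← cs.wordProd_reverse, reverse_eraseIdx_reverse ω j hj]

/-- Any non-reduced word admits a strictly shorter sublist with the same product. -/
lemma shorten_of_not_reduced (cs : CoxeterSystem M W) :
    ∀ ν : List B, ¬ cs.IsReduced ν →
      ∃ ν₂ : List B, ν₂.Sublist ν ∧ ν₂.length < ν.length ∧ cs.wordProd ν₂ = cs.wordProd ν := by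
  intro ν
  induction ν with
  | nil => intro h; exact absurd (by simp [CoxeterSystem.IsReduced]) h
  | cons i μ ih =>
    intro h
    by_cases hμ : cs.IsReduced μ
    · have hne : cs.length (cs.wordProd (i :: μ)) ≠ (i :: μ).length := h
      have hlen := cs.length_simple_mul (cs.wordProd μ) i
      have hlt : cs.length (cs.simple i * cs.wordProd μ) < cs.length (cs.wordProd μ) := by
        rcases hlen with heq | hdes
        · exfalso
          apply hne
          rw [cs.wordProd_cons, heq, hμ]
          simp
        · omega
      obtain ⟨j, hj, herase⟩ := exchange_left cs (cs.isReflection_simple i) hlt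
      refine ⟨μ.eraseIdx j, (List.eraseIdx_sublist μ j).trans (List.sublist_cons_self i μ), ?_, ?_⟩
      · rw [List.length_eraseIdx]
        simp only [List.length_cons]
        split <;> omega
      · rw [cs.wordProd_cons, herase]
    · obtain ⟨μ₂, hsub, hlen, hprod⟩ := ih hμ
      refine ⟨i :: μ₂, List.cons_sublist_cons.mpr hsub, by simpa using hlen, ?_⟩
      rw [cs.wordProd_cons, cs.wordProd_cons, hprod]

/-- Every word has a reduced sublist with the same product. -/
lemma exists_reduced_sublist (cs : CoxeterSystem M W) :
    ∀ (n : ℕ) (ν : List B), ν.length ≤ n →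
      ∃ ν' : List B, ν'.Sublist ν ∧ cs.IsReduced ν' ∧ cs.wordProd ν' = cs.wordProd ν := by
  intro n
  induction n with
  | zero =>
    intro ν hν
    have : ν = [] := List.length_eq_zero_iff.mp (Nat.le_zero.mp hν)
    subst this
    exact ⟨[], List.Sublist.refl _, by simp [CoxeterSystem.IsReduced], rfl⟩
  | succ n ih =>
    intro ν hν
    by_cases hred : cs.IsReduced ν
    · exact ⟨ν, List.Sublist.refl _, hred, rfl⟩
    · obtain ⟨ν₂, hsub, hlen, hprod⟩ := shorten_of_not_reduced cs ν hred
      obtain ⟨ν', hsub', hred', hprod'⟩ := ih ν₂ (by omega)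
      exact ⟨ν', hsub'.trans hsub, hred', hprod'.trans hprod⟩

lemma wordProd_mem_para (cs : CoxeterSystem M W) (S : Set B) (ν : List B)
    (hν : ∀ b ∈ ν, b ∈ S) : cs.wordProd ν ∈ paraSubgroup cs S := by
  induction ν with
  | nil => simp [cs.wordProd_nil, (paraSubgroup cs S).one_mem]
  | cons i μ ih =>
    rw [cs.wordProd_cons]
    exact (paraSubgroup cs S).mul_mem
      (Subgroup.subset_closure ⟨i, hν i (List.mem_cons_self), rfl⟩)
      (ih (fun b hb => hν b (List.mem_cons_of_mem i hb)))

lemma mem_para_exists_word (cs : CoxeterSystem M W) (S : Set B) (u : W)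
    (hu : u ∈ paraSubgroup cs S) :
    ∃ ν : List B, cs.IsReduced ν ∧ (∀ b ∈ ν, b ∈ S) ∧ cs.wordProd ν = u := by
  have h0 : ∃ ν₀ : List B, (∀ b ∈ ν₀, b ∈ S) ∧ cs.wordProd ν₀ = u := by
    refine Subgroup.closure_induction ?_ ?_ ?_ ?_ hu
    · rintro x ⟨i, hiS, rfl⟩ 
      exact ⟨[i], by simpa using hiS, by simp⟩
    · exact ⟨[], by simp, by simp⟩
    · rintro x y _ _ ⟨νx, hxS, hx⟩ ⟨νy, hyS, hy⟩
      exact ⟨νx ++ νy, by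
        intro b hb
        rcases List.mem_append.mp hb with h | h
        exacts [hxS b h, hyS b h], by rw [cs.wordProd_append, hx, hy]⟩
    · rintro x _ ⟨νx, hxS, hx⟩
      exact ⟨νx.reverse, fun b hb => hxS b (List.mem_reverse.mp hb),
        by rw [cs.wordProd_reverse, hx]⟩
  obtain ⟨ν₀, hS0, hprod0⟩ := h0
  obtain ⟨ν, hsub, hred, hprod⟩ := exists_reduced_sublist cs ν₀.length ν₀ le_rfl
  exact ⟨ν, hred, fun b hb => hS0 b (hsub.subset hb), hprod.trans hprod0⟩

/-- Key lemma: if `x` is the minimal-length representative of `x W_λ` with reduced word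
`ω`, and `ν` is a reduced word with all letters in `S`, then `ω ++ ν` is reduced. -/
lemma isReduced_append_of_minRep (cs : CoxeterSystem M W) (S : Set B) (x : W)
    (hx : IsMinRep cs S x) (ω : List B) (hω : cs.IsReduced ω) (hπω : cs.wordProd ω = x) :
    ∀ ν : List B, cs.IsReduced ν → (∀ b ∈ ν, b ∈ S) → cs.IsReduced (ω ++ ν) := by
  intro ν
  induction ν using List.reverseRecOn with
  | nil => intro _ _; simpa using hω
  | append_singleton ν' i ihind =>
    intro hν hνS
    have hν' : cs.IsReduced ν' := by
      have := hν.take ν'.length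
      rwa [List.take_left] at this
    have hν'S : ∀ b ∈ ν', b ∈ S := fun b hb => hνS b (List.mem_append_left _ hb)
    have hiS : i ∈ S := hνS i (List.mem_append_right _ (List.mem_singleton.mpr rfl))
    have hμred : cs.IsReduced (ω ++ ν') := ihind hν' hν'S
    set μ : List B := ω ++ ν' with hμdef
    have hgoal : cs.length (cs.wordProd μ * cs.simple i) = μ.length + 1 := by
      rcases cs.length_mul_simple (cs.wordProd μ) i with heq | hdes
      · rw [heq, hμred]
      · exfalso
        have hlt : cs.length (cs.wordProd μ * cs.simple i) < cs.length (cs.wordProd μ) := by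
          omega
        obtain ⟨j, hj, herase⟩ := exchange_right cs μ i hlt
        have hjlen : j < ω.length + ν'.length := by simpa [hμdef] using hj
        by_cases hcase : j < ω.length
        · -- erasure in the ω part: contradicts minimality of x
          have herase' : x * cs.wordProd ν' * cs.simple i
              = cs.wordProd (ω.eraseIdx j) * cs.wordProd ν' := by
            calc x * cs.wordProd ν' * cs.simple i
                = cs.wordProd μ * cs.simple i := by rw [hμdef, cs.wordProd_append, hπω]
              _ = cs.wordProd (μ.eraseIdx j) := herase
              _ = cs.wordProd (ω.eraseIdx j ++ ν') := by
                  rw [hμdef, List.eraseIdx_append_of_lt_length hcase]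
              _ = cs.wordProd (ω.eraseIdx j) * cs.wordProd ν' := cs.wordProd_append _ _
          have h3 := congrArg (fun u => u * (cs.wordProd ν')⁻¹) herase'
          simp only [mul_inv_cancel_right] at h3
          -- h3 : x * cs.wordProd ν' * cs.simple i * (cs.wordProd ν')⁻¹ = π (ω.eraseIdx j)
          have hmem : cs.wordProd (ω.eraseIdx j) ∈ leftCosetOf cs S x := by
            show x⁻¹ * cs.wordProd (ω.eraseIdx j) ∈ paraSubgroup cs S
            have h2 : x⁻¹ * cs.wordProd (ω.eraseIdx j)
                = cs.wordProd ν' * (cs.simple i * (cs.wordProd ν')⁻¹) := by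
              rw [← h3]
              simp [mul_assoc]
            rw [h2]
            exact (paraSubgroup cs S).mul_mem (wordProd_mem_para cs S ν' hν'S)
              ((paraSubgroup cs S).mul_mem
                (Subgroup.subset_closure ⟨i, hiS, rfl⟩)
                ((paraSubgroup cs S).inv_mem (wordProd_mem_para cs S ν' hν'S)))
          have hxle := hx _ hmem
          have hlenle := cs.length_wordProd_le (ω.eraseIdx j)
          have hxlen : cs.length x = ω.length := by rw [← hπω, hω]
          rw [List.length_eraseIdx] at hlenle
          simp only [hcase, if_pos] at hlenle
          omega
        · -- erasure in the ν' part: contradicts reducedness of ν' ++ [i]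
          push_neg at hcase
          have hcancel : cs.wordProd ν' * cs.simple i
              = cs.wordProd (ν'.eraseIdx (j - ω.length)) := by
            apply mul_left_cancel (a := cs.wordProd ω)
            calc cs.wordProd ω * (cs.wordProd ν' * cs.simple i)
                = cs.wordProd μ * cs.simple i := by
                  rw [hμdef, cs.wordProd_append, mul_assoc]
              _ = cs.wordProd (μ.eraseIdx j) := herase
              _ = cs.wordProd (ω ++ ν'.eraseIdx (j - ω.length)) := by
                  rw [hμdef, List.eraseIdx_append_of_length_le hcase]
              _ = cs.wordProd ω * cs.wordProd (ν'.eraseIdx (j - ω.length)) :=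
                  cs.wordProd_append _ _
          have hνprod : cs.wordProd (ν' ++ [i])
              = cs.wordProd (ν'.eraseIdx (j - ω.length)) := by
            rw [cs.wordProd_append, cs.wordProd_singleton, hcancel]
          have h1 := cs.length_wordProd_le (ν'.eraseIdx (j - ω.length))
          have h2 : cs.length (cs.wordProd (ν' ++ [i])) = ν'.length + 1 := by
            rw [hν]; simp
          rw [hνprod] at h2
          rw [List.length_eraseIdx] at h1
          have hj2 : j - ω.length < ν'.length := by omega
          simp only [hj2, if_pos] at h1
          omega
    show cs.IsReduced (ω ++ (ν' ++ [i]))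
    rw [← List.append_assoc]
    show cs.length (cs.wordProd (ω ++ ν' ++ [i])) = (ω ++ ν' ++ [i]).length
    rw [← List.concat_eq_append, cs.wordProd_concat]
    simpa [hμdef, Nat.add_assoc] using hgoal

end AuxStrongExchange

/-- Assume `W` is finite. If `x ∈ W^λ`, `w ∈ W` and `w ≤ x`, then the
intersection `[w, w₀] ∩ x·W_λ = {z ∈ x·W_λ : w ≤ z}` is nonempty and has a least
element in the Bruhat order. -/
theorem exists_least_of_interval_inter_coset
    [Finite W] (cs : CoxeterSystem M W) (S : Set B) (x w : W)
    (hx : IsMinRep cs S x)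
    (hwx : BruhatLE cs w x) :
    ∃ m ∈ {z ∈ leftCosetOf cs S x | BruhatLE cs w z},
      ∀ z ∈ {z ∈ leftCosetOf cs S x | BruhatLE cs w z}, BruhatLE cs m z := by
  classical
  have hxmem : x ∈ leftCosetOf cs S x := by
    show x⁻¹ * x ∈ paraSubgroup cs S
    rw [inv_mul_cancel]
    exact (paraSubgroup cs S).one_mem
  refine ⟨x, ⟨hxmem, hwx⟩, ?_⟩
  rintro z ⟨hz1, _⟩
  obtain ⟨ν, hνred, hνS, hνprod⟩ := mem_para_exists_word cs S (x⁻¹ * z) hz1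
  obtain ⟨ω, hωred, hωprod⟩ := cs.exists_reduced_word' x
  have happred : cs.IsReduced (ω ++ ν) :=
    isReduced_append_of_minRep cs S x hx ω hωred hωprod.symm ν hνred hνS
  have happrod : cs.wordProd (ω ++ ν) = z := by
    rw [cs.wordProd_append, ← hωprod, hνprod, ← mul_assoc, mul_inv_cancel, one_mul]
  exact ⟨ω ++ ν, happred, happrod, ω, List.sublist_append_left ω ν, hωred, hωprod.symm⟩

end SingularBGG
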